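/- Let n ≥ 2 be a natural number, let c ≥ 0 be a real number, and let g : ℕ → ℝ satisfy g(n+1) = 0 and g(ℓ) ≥ c/n + (1 − 1/ℓ)·g(ℓ+1) for all natural numbers ℓ with 2 ≤ ℓ ≤ n. Then for all ℓ with 2 ≤ ℓ ≤ n, g(ℓ) ≥ ((ℓ−1)/n)·ln(n/ℓ)·c. -/

import Mathlib

open Finset

/-- Harmonic sum dominates the log difference. -/
lemma log_le_harmonic (a : ℕ) (ha : 1 ≤ a) : ∀ b : ℕ, a ≤ b →
    Real.log b - Real.log a ≤ ∑ k ∈ Ico a b, (1 : ℝ) / k := by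
  intro b hb
  induction b, hb using Nat.le_induction with
  | base => simp
  | succ b hab ih =>
    rw [Finset.sum_Ico_succ_top hab]
    have hb1 : (1 : ℝ) ≤ (b : ℝ) := by exact_mod_cast ha.trans hab
    have hbpos : (0 : ℝ) < b := by linarith
    have h1 : Real.log ((b + 1 : ℝ) / b) ≤ (b + 1 : ℝ) / b - 1 :=
      Real.log_le_sub_one_of_pos (by positivity)
    have h2 : (b + 1 : ℝ) / b - 1 = 1 / b := by field_simp; ring
    have h3 : Real.log ((b + 1 : ℝ) / b) = Real.log (b + 1) - Real.log b :=
      Real.log_div (by positivity) (ne_of_gt hbpos)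
    push_cast
    rw [h3, h2] at h1
    linarith

/-- The recursion from Proposition 1 of the paper has solution
`g ℓ ≥ ((ℓ-1)/n) ln(n/ℓ) c`. -/
theorem secretary_tentative_recursion (n : ℕ) (hn : 2 ≤ n) (c : ℝ) (hc : 0 ≤ c)
    (g : ℕ → ℝ) (hg0 : g (n + 1) = 0)
    (hrec : ∀ ℓ : ℕ, 2 ≤ ℓ → ℓ ≤ n →
      g ℓ ≥ c / n + (1 - 1 / (ℓ : ℝ)) * g (ℓ + 1)) :
    ∀ ℓ : ℕ, 2 ≤ ℓ → ℓ ≤ n →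
      g ℓ ≥ ((ℓ : ℝ) - 1) / n * Real.log ((n : ℝ) / ℓ) * c := by
  have hnpos : (0 : ℝ) < n := by positivity
  -- key: downward induction with harmonic sums
  have key : ∀ m : ℕ, ∀ ℓ : ℕ, 2 ≤ ℓ → ℓ ≤ n + 1 → n + 1 - ℓ ≤ m →
      g ℓ ≥ ((ℓ : ℝ) - 1) / n * (∑ k ∈ Ico (ℓ - 1) n, (1 : ℝ) / k) * c := by
    intro m
    induction m with
    | zero =>
      intro ℓ h2 hle hm
      have : ℓ = n + 1 := by omega
      subst this
      rw [hg0]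
      have : Ico (n + 1 - 1) n = ∅ := by simp
      rw [this]
      simp
    | succ m ih =>
      intro ℓ h2 hle hm
      rcases eq_or_lt_of_le hle with heq | hlt
      · subst heq
        rw [hg0]
        have : Ico (n + 1 - 1) n = ∅ := by simp
        rw [this]; simp
      · have hln : ℓ ≤ n := by omega
        have hrecℓ := hrec ℓ h2 hln
        have hih := ih (ℓ + 1) (by omega) (by omega) (by omega)
        have hℓpos : (0 : ℝ) < ℓ := by positivity
        have hℓ2 : (2 : ℝ) ≤ (ℓ : ℝ) := by exact_mod_cast h2
        have hcoef : (0 : ℝ) ≤ 1 - 1 / (ℓ : ℝ) := by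
          rw [sub_nonneg, div_le_one hℓpos]; linarith
        -- split the Ico sum
        have hsplit : ∑ k ∈ Ico (ℓ - 1) n, (1 : ℝ) / k
            = 1 / ((ℓ : ℝ) - 1) + ∑ k ∈ Ico ℓ n, (1 : ℝ) / k := by
          obtain ⟨j, rfl⟩ : ∃ j, ℓ = j + 1 := ⟨ℓ - 1, by omega⟩
          rw [show j + 1 - 1 = j by omega,
            Finset.sum_eq_sum_Ico_succ_bot (show j < n by omega)]
          push_cast
          simp only [one_div]
          norm_num
        have hsucc : ((ℓ + 1 : ℕ) : ℝ) = (ℓ : ℝ) + 1 := by push_cast; ring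
        have hIco : Ico ((ℓ + 1) - 1) n = Ico ℓ n := by congr 1
        rw [hIco, hsucc] at hih
        set S : ℝ := ∑ k ∈ Ico ℓ n, (1 : ℝ) / k with hS
        have hSnn : 0 ≤ S := Finset.sum_nonneg (fun k _ => by positivity)
        have step : (1 - 1 / (ℓ : ℝ)) * g (ℓ + 1)
            ≥ (1 - 1 / (ℓ : ℝ)) * (((ℓ : ℝ) + 1 - 1) / n * S * c) :=
          mul_le_mul_of_nonneg_left hih hcoef
        have halg : c / n + (1 - 1 / (ℓ : ℝ)) * (((ℓ : ℝ) + 1 - 1) / n * S * c)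
            = ((ℓ : ℝ) - 1) / n * (1 / ((ℓ : ℝ) - 1) + S) * c := by
          have hne : ((ℓ : ℝ) - 1) ≠ 0 := by linarith
          have hnne : (n : ℝ) ≠ 0 := ne_of_gt hnpos
          field_simp
          ring
        calc g ℓ ≥ c / n + (1 - 1 / (ℓ : ℝ)) * g (ℓ + 1) := hrecℓ
          _ ≥ c / n + (1 - 1 / (ℓ : ℝ)) * (((ℓ : ℝ) + 1 - 1) / n * S * c) := by linarith
          _ = ((ℓ : ℝ) - 1) / n * (1 / ((ℓ : ℝ) - 1) + S) * c := halg
          _ = ((ℓ : ℝ) - 1) / n * (∑ k ∈ Ico (ℓ - 1) n, (1 : ℝ) / k) * c := by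
              rw [hsplit]
  intro ℓ h2 hln
  have hkey := key (n + 1 - ℓ) ℓ h2 (by omega) le_rfl
  have hℓpos : (0 : ℝ) < ℓ := by positivity
  have hℓ2 : (2 : ℝ) ≤ (ℓ : ℝ) := by exact_mod_cast h2
  -- compare harmonic sum to log
  have hlog : Real.log ((n : ℝ) / ℓ) ≤ ∑ k ∈ Ico (ℓ - 1) n, (1 : ℝ) / k := by
    have h1 : Real.log n - Real.log ℓ ≤ ∑ k ∈ Ico ℓ n, (1 : ℝ) / k :=
      log_le_harmonic ℓ (by omega) n hln
    have hsub : (Ico ℓ n : Finset ℕ) ⊆ Ico (ℓ - 1) n := by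
      apply Finset.Ico_subset_Ico (by omega) le_rfl
    have h2' : ∑ k ∈ Ico ℓ n, (1 : ℝ) / k ≤ ∑ k ∈ Ico (ℓ - 1) n, (1 : ℝ) / k :=
      Finset.sum_le_sum_of_subset_of_nonneg hsub (fun k _ _ => by positivity)
    rw [Real.log_div (by positivity) (ne_of_gt hℓpos)]
    linarith
  have hfac : 0 ≤ ((ℓ : ℝ) - 1) / n := div_nonneg (by linarith) hnpos.le
  calc g ℓ ≥ ((ℓ : ℝ) - 1) / n * (∑ k ∈ Ico (ℓ - 1) n, (1 : ℝ) / k) * c := hkey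
    _ ≥ ((ℓ : ℝ) - 1) / n * Real.log ((n : ℝ) / ℓ) * c := by
        apply mul_le_mul_of_nonneg_right _ hc
        exact mul_le_mul_of_nonneg_left hlog hfac
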